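/- Deterministic core of the hybrid error bound (d = 3, t = 1): let A ∈ ℝ^{n₁×n₂×n₃} with unfoldings A_{(i)}. Suppose C ∈ ℝ^{n₁×r₁} has full column rank and A_{(1)} = C B + E; suppose for j = 2,3, U_j ∈ ℝ^{n_j×r_j} has orthonormal columns and A_{(j)} = U_j Σ_j V_jᵀ + H_j with V_jᵀV_j = I. Define the core tensor G = A ×₁ C⁺ ×₂ U₂ᵀ ×₃ U₃ᵀ and the approximation Â = G ×₁ C ×₂ U₂ ×₃ U₃. Then ‖A - Â‖_F² ≤ ‖E‖_F² + ‖H₂‖_F² + ‖H₃‖_F². -/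
import Mathlib


open Matrix

/-- Frobenius norm of a real matrix. -/
noncomputable def frobNorm {α β : Type*} [Fintype α] [Fintype β]
    (A : Matrix α β ℝ) : ℝ := Real.sqrt (∑ i, ∑ j, (A i j) ^ 2)

/-- Squared Frobenius norm of a real matrix. -/
noncomputable def frobSq {α β : Type*} [Fintype α] [Fintype β]
    (A : Matrix α β ℝ) : ℝ := ∑ i, ∑ j, (A i j) ^ 2

/-- Spectral norm (largest singular value) of a real matrix: the operator norm
of the induced linear map between Euclidean spaces. -/
noncomputable def specNorm {α β : Type*} [Fintype α] [Fintype β] [DecidableEq α] [DecidableEq β]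
    (A : Matrix α β ℝ) : ℝ :=
  ‖LinearMap.toContinuousLinearMap (Matrix.toEuclideanLin A)‖

/-- Moore–Penrose pseudoinverse of a full-column-rank matrix: `C⁺ = (CᵀC)⁻¹Cᵀ`. -/
noncomputable def pinv {m k : ℕ} (C : Matrix (Fin m) (Fin k) ℝ) : Matrix (Fin k) (Fin m) ℝ :=
  (Cᵀ * C)⁻¹ * Cᵀ

/-- Mode-1 product of an order-3 tensor with a matrix. -/
def mode1 {n₁ n₂ n₃ m : ℕ} (U : Matrix (Fin m) (Fin n₁) ℝ)
    (X : Fin n₁ × Fin n₂ × Fin n₃ → ℝ) : Fin m × Fin n₂ × Fin n₃ → ℝ :=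
  fun p => ∑ j, U p.1 j * X (j, p.2.1, p.2.2)

/-- Mode-2 product of an order-3 tensor with a matrix. -/
def mode2 {n₁ n₂ n₃ m : ℕ} (V : Matrix (Fin m) (Fin n₂) ℝ)
    (X : Fin n₁ × Fin n₂ × Fin n₃ → ℝ) : Fin n₁ × Fin m × Fin n₃ → ℝ :=
  fun p => ∑ k, V p.2.1 k * X (p.1, k, p.2.2)

/-- Mode-3 product of an order-3 tensor with a matrix. -/
def mode3 {n₁ n₂ n₃ m : ℕ} (W : Matrix (Fin m) (Fin n₃) ℝ)
    (X : Fin n₁ × Fin n₂ × Fin n₃ → ℝ) : Fin n₁ × Fin n₂ × Fin m → ℝ :=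
  fun p => ∑ l, W p.2.2 l * X (p.1, p.2.1, l)

/-- Mode-1 unfolding of an order-3 tensor. -/
def unfold1 {n₁ n₂ n₃ : ℕ} (X : Fin n₁ × Fin n₂ × Fin n₃ → ℝ) :
    Matrix (Fin n₁) (Fin n₂ × Fin n₃) ℝ := Matrix.of fun j p => X (j, p.1, p.2)

/-- Mode-2 unfolding of an order-3 tensor. -/
def unfold2 {n₁ n₂ n₃ : ℕ} (X : Fin n₁ × Fin n₂ × Fin n₃ → ℝ) :
    Matrix (Fin n₂) (Fin n₁ × Fin n₃) ℝ := Matrix.of fun k p => X (p.1, k, p.2)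

/-- Mode-3 unfolding of an order-3 tensor. -/
def unfold3 {n₁ n₂ n₃ : ℕ} (X : Fin n₁ × Fin n₂ × Fin n₃ → ℝ) :
    Matrix (Fin n₃) (Fin n₁ × Fin n₂) ℝ := Matrix.of fun l p => X (p.1, p.2, l)

/-- Frobenius norm of an order-3 tensor. -/
noncomputable def tnorm {n₁ n₂ n₃ : ℕ} (X : Fin n₁ × Fin n₂ × Fin n₃ → ℝ) : ℝ :=
  Real.sqrt (∑ p, (X p) ^ 2)

/-- Squared Frobenius norm of an order-3 tensor. -/
noncomputable def tSq {n₁ n₂ n₃ : ℕ} (X : Fin n₁ × Fin n₂ × Fin n₃ → ℝ) : ℝ :=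
  ∑ p, (X p) ^ 2


section Aux

variable {α β γ : Type*} [Fintype α] [Fintype β] [Fintype γ]

/-- Frobenius inner product. -/
noncomputable def minner (M N : Matrix α β ℝ) : ℝ := ∑ i, ∑ j, M i j * N i j

noncomputable def tinner {n₁ n₂ n₃ : ℕ} (X Y : Fin n₁ × Fin n₂ × Fin n₃ → ℝ) : ℝ :=
  ∑ p, X p * Y p

lemma minner_eq_trace (M N : Matrix α β ℝ) : minner M N = Matrix.trace (Mᵀ * N) := by
  simp only [minner, Matrix.trace, Matrix.diag, Matrix.mul_apply, Matrix.transpose_apply]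
  exact Finset.sum_comm

lemma minner_mul_left (P : Matrix α γ ℝ) (M : Matrix γ β ℝ) (N : Matrix α β ℝ) :
    minner (P * M) N = minner M (Pᵀ * N) := by
  rw [minner_eq_trace, minner_eq_trace, Matrix.transpose_mul, Matrix.mul_assoc]

lemma minner_zero_right (M : Matrix α β ℝ) : minner M 0 = 0 := by
  simp [minner]

lemma frobSq_eq_minner (M : Matrix α β ℝ) : frobSq M = minner M M := by
  simp [frobSq, minner, sq]

lemma frobSq_nonneg (M : Matrix α β ℝ) : 0 ≤ frobSq M :=
  Finset.sum_nonneg fun _ _ => Finset.sum_nonneg fun _ _ => sq_nonneg _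

lemma frobSq_add (M N : Matrix α β ℝ) :
    frobSq (M + N) = frobSq M + 2 * minner M N + frobSq N := by
  simp only [frobSq, minner, Matrix.add_apply, Finset.mul_sum, ← Finset.sum_add_distrib]
  exact Finset.sum_congr rfl fun _ _ => Finset.sum_congr rfl fun _ _ => by ring

lemma proj_minner_zero [DecidableEq α] (P : Matrix α α ℝ) (hT : Pᵀ = P) (hI : P * P = P)
    (M N : Matrix α β ℝ) : minner ((1 - P) * M) (P * N) = 0 := by
  rw [minner_mul_left]
  have h : (1 - P)ᵀ * (P * N) = 0 := by
    rw [Matrix.transpose_sub, Matrix.transpose_one, hT, ← Matrix.mul_assoc,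
      Matrix.sub_mul, Matrix.one_mul, hI, sub_self, Matrix.zero_mul]
  rw [h, minner_zero_right]

lemma frobSq_proj_le [DecidableEq α] (P : Matrix α α ℝ) (hT : Pᵀ = P) (hI : P * P = P)
    (M : Matrix α β ℝ) : frobSq (P * M) ≤ frobSq M := by
  have hsum : M = P * M + (1 - P) * M := by
    rw [← Matrix.add_mul]; simp
  have hcross : minner (P * M) ((1 - P) * M) = 0 := by
    rw [minner_mul_left]
    have h : Pᵀ * ((1 - P) * M) = 0 := by
      rw [hT, ← Matrix.mul_assoc, Matrix.mul_sub, Matrix.mul_one, hI, sub_self,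
        Matrix.zero_mul]
    rw [h, minner_zero_right]
  calc frobSq (P * M) ≤ frobSq (P * M) + frobSq ((1 - P) * M) :=
        le_add_of_nonneg_right (frobSq_nonneg _)
    _ = frobSq M := by
        conv_rhs => rw [hsum]
        rw [frobSq_add, hcross]; ring

end Aux

section TensorAux

variable {n₁ n₂ n₃ m m' : ℕ}

lemma unfold1_mode1 (M : Matrix (Fin m) (Fin n₁) ℝ) (X : Fin n₁ × Fin n₂ × Fin n₃ → ℝ) :
    unfold1 (mode1 M X) = M * unfold1 X := by
  ext j p; simp [unfold1, mode1, Matrix.mul_apply]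

lemma unfold2_mode2 (M : Matrix (Fin m) (Fin n₂) ℝ) (X : Fin n₁ × Fin n₂ × Fin n₃ → ℝ) :
    unfold2 (mode2 M X) = M * unfold2 X := by
  ext k p; simp [unfold2, mode2, Matrix.mul_apply]

lemma unfold3_mode3 (M : Matrix (Fin m) (Fin n₃) ℝ) (X : Fin n₁ × Fin n₂ × Fin n₃ → ℝ) :
    unfold3 (mode3 M X) = M * unfold3 X := by
  ext l p; simp [unfold3, mode3, Matrix.mul_apply]

lemma unfold1_sub (X Y : Fin n₁ × Fin n₂ × Fin n₃ → ℝ) :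
    unfold1 (X - Y) = unfold1 X - unfold1 Y := rfl

lemma unfold2_sub (X Y : Fin n₁ × Fin n₂ × Fin n₃ → ℝ) :
    unfold2 (X - Y) = unfold2 X - unfold2 Y := rfl

lemma unfold3_sub (X Y : Fin n₁ × Fin n₂ × Fin n₃ → ℝ) :
    unfold3 (X - Y) = unfold3 X - unfold3 Y := rfl

lemma tSq_unfold1 (X : Fin n₁ × Fin n₂ × Fin n₃ → ℝ) : tSq X = frobSq (unfold1 X) := by
  simp [tSq, frobSq, unfold1, Fintype.sum_prod_type]

lemma tSq_unfold2 (X : Fin n₁ × Fin n₂ × Fin n₃ → ℝ) : tSq X = frobSq (unfold2 X) := by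
  simp only [tSq, frobSq, unfold2, Fintype.sum_prod_type, Matrix.of_apply]
  exact Finset.sum_comm

lemma tSq_unfold3 (X : Fin n₁ × Fin n₂ × Fin n₃ → ℝ) : tSq X = frobSq (unfold3 X) := by
  simp only [tSq, frobSq, unfold3, Fintype.sum_prod_type, Matrix.of_apply]
  calc (∑ i, ∑ k, ∑ l, X (i, k, l) ^ 2) = ∑ i, ∑ l, ∑ k, X (i, k, l) ^ 2 :=
        Finset.sum_congr rfl fun _ _ => Finset.sum_comm
    _ = ∑ l, ∑ i, ∑ k, X (i, k, l) ^ 2 := Finset.sum_comm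

lemma tinner_unfold1 (X Y : Fin n₁ × Fin n₂ × Fin n₃ → ℝ) :
    tinner X Y = minner (unfold1 X) (unfold1 Y) := by
  simp [tinner, minner, unfold1, Fintype.sum_prod_type]

lemma tinner_unfold2 (X Y : Fin n₁ × Fin n₂ × Fin n₃ → ℝ) :
    tinner X Y = minner (unfold2 X) (unfold2 Y) := by
  simp only [tinner, minner, unfold2, Fintype.sum_prod_type, Matrix.of_apply]
  exact Finset.sum_comm

lemma tinner_add_right (X Y Z : Fin n₁ × Fin n₂ × Fin n₃ → ℝ) :
    tinner X (Y + Z) = tinner X Y + tinner X Z := by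
  simp only [tinner, Pi.add_apply, ← Finset.sum_add_distrib]
  exact Finset.sum_congr rfl fun _ _ => by ring

lemma tSq_add (X Y : Fin n₁ × Fin n₂ × Fin n₃ → ℝ) :
    tSq (X + Y) = tSq X + 2 * tinner X Y + tSq Y := by
  simp only [tSq, tinner, Pi.add_apply, Finset.mul_sum, ← Finset.sum_add_distrib]
  exact Finset.sum_congr rfl fun _ _ => by ring

lemma mode1_mode1 (M : Matrix (Fin m') (Fin m) ℝ) (N : Matrix (Fin m) (Fin n₁) ℝ)
    (X : Fin n₁ × Fin n₂ × Fin n₃ → ℝ) : mode1 M (mode1 N X) = mode1 (M * N) X := by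
  funext p
  simp only [mode1, Matrix.mul_apply, Finset.mul_sum, Finset.sum_mul]
  rw [Finset.sum_comm]
  exact Finset.sum_congr rfl fun _ _ => Finset.sum_congr rfl fun _ _ => by ring

lemma mode2_mode2 (M : Matrix (Fin m') (Fin m) ℝ) (N : Matrix (Fin m) (Fin n₂) ℝ)
    (X : Fin n₁ × Fin n₂ × Fin n₃ → ℝ) : mode2 M (mode2 N X) = mode2 (M * N) X := by
  funext p
  simp only [mode2, Matrix.mul_apply, Finset.mul_sum, Finset.sum_mul]
  rw [Finset.sum_comm]
  exact Finset.sum_congr rfl fun _ _ => Finset.sum_congr rfl fun _ _ => by ring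

lemma mode3_mode3 (M : Matrix (Fin m') (Fin m) ℝ) (N : Matrix (Fin m) (Fin n₃) ℝ)
    (X : Fin n₁ × Fin n₂ × Fin n₃ → ℝ) : mode3 M (mode3 N X) = mode3 (M * N) X := by
  funext p
  simp only [mode3, Matrix.mul_apply, Finset.mul_sum, Finset.sum_mul]
  rw [Finset.sum_comm]
  exact Finset.sum_congr rfl fun _ _ => Finset.sum_congr rfl fun _ _ => by ring

lemma mode1_mode2 (M : Matrix (Fin m) (Fin n₁) ℝ) (N : Matrix (Fin m') (Fin n₂) ℝ)
    (X : Fin n₁ × Fin n₂ × Fin n₃ → ℝ) : mode1 M (mode2 N X) = mode2 N (mode1 M X) := by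
  funext p
  simp only [mode1, mode2, Finset.mul_sum]
  rw [Finset.sum_comm]
  exact Finset.sum_congr rfl fun _ _ => Finset.sum_congr rfl fun _ _ => by ring

lemma mode1_mode3 (M : Matrix (Fin m) (Fin n₁) ℝ) (N : Matrix (Fin m') (Fin n₃) ℝ)
    (X : Fin n₁ × Fin n₂ × Fin n₃ → ℝ) : mode1 M (mode3 N X) = mode3 N (mode1 M X) := by
  funext p
  simp only [mode1, mode3, Finset.mul_sum]
  rw [Finset.sum_comm]
  exact Finset.sum_congr rfl fun _ _ => Finset.sum_congr rfl fun _ _ => by ring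

lemma mode2_mode3 (M : Matrix (Fin m) (Fin n₂) ℝ) (N : Matrix (Fin m') (Fin n₃) ℝ)
    (X : Fin n₁ × Fin n₂ × Fin n₃ → ℝ) : mode2 M (mode3 N X) = mode3 N (mode2 M X) := by
  funext p
  simp only [mode2, mode3, Finset.mul_sum]
  rw [Finset.sum_comm]
  exact Finset.sum_congr rfl fun _ _ => Finset.sum_congr rfl fun _ _ => by ring

lemma mode1_sub (M : Matrix (Fin m) (Fin n₁) ℝ) (X Y : Fin n₁ × Fin n₂ × Fin n₃ → ℝ) :
    mode1 M (X - Y) = mode1 M X - mode1 M Y := by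
  funext p
  simp [mode1, mul_sub, Finset.sum_sub_distrib]

lemma mode2_sub (M : Matrix (Fin m) (Fin n₂) ℝ) (X Y : Fin n₁ × Fin n₂ × Fin n₃ → ℝ) :
    mode2 M (X - Y) = mode2 M X - mode2 M Y := by
  funext p
  simp [mode2, mul_sub, Finset.sum_sub_distrib]

end TensorAux

lemma isUnit_of_rank_eq_card {k : ℕ} (M : Matrix (Fin k) (Fin k) ℝ) (h : M.rank = k) :
    IsUnit M := by
  rw [← Matrix.mulVec_surjective_iff_isUnit]
  have hr : LinearMap.range M.mulVecLin = ⊤ := by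
    apply Submodule.eq_top_of_finrank_eq
    rw [show Module.finrank ℝ ↥(LinearMap.range M.mulVecLin) = M.rank from rfl, h,
      Module.finrank_fintype_fun_eq_card, Fintype.card_fin]
  intro y
  obtain ⟨x, hx⟩ := LinearMap.range_eq_top.mp hr y
  exact ⟨x, hx⟩
theorem stmt12 {n₁ n₂ n₃ r₁ r₂ r₃ : ℕ} (A : Fin n₁ × Fin n₂ × Fin n₃ → ℝ)
    (C : Matrix (Fin n₁) (Fin r₁) ℝ) (B : Matrix (Fin r₁) (Fin n₂ × Fin n₃) ℝ)
    (E : Matrix (Fin n₁) (Fin n₂ × Fin n₃) ℝ)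
    (U₂ : Matrix (Fin n₂) (Fin r₂) ℝ) (S₂ : Matrix (Fin r₂) (Fin r₂) ℝ)
    (V₂ : Matrix (Fin n₁ × Fin n₃) (Fin r₂) ℝ) (H₂ : Matrix (Fin n₂) (Fin n₁ × Fin n₃) ℝ)
    (U₃ : Matrix (Fin n₃) (Fin r₃) ℝ) (S₃ : Matrix (Fin r₃) (Fin r₃) ℝ)
    (V₃ : Matrix (Fin n₁ × Fin n₂) (Fin r₃) ℝ) (H₃ : Matrix (Fin n₃) (Fin n₁ × Fin n₂) ℝ)
    (hrank : C.rank = r₁) (hA1 : unfold1 A = C * B + E)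
    (hU₂ : U₂ᵀ * U₂ = 1) (hV₂ : V₂ᵀ * V₂ = 1) (hA2 : unfold2 A = U₂ * S₂ * V₂ᵀ + H₂)
    (hU₃ : U₃ᵀ * U₃ = 1) (hV₃ : V₃ᵀ * V₃ = 1) (hA3 : unfold3 A = U₃ * S₃ * V₃ᵀ + H₃) :
    tSq (A - mode3 U₃ (mode2 U₂ (mode1 C
        (mode3 U₃ᵀ (mode2 U₂ᵀ (mode1 (pinv C) A)))))) ≤
      frobSq E + frobSq H₂ + frobSq H₃ := by
  set P₁ : Matrix (Fin n₁) (Fin n₁) ℝ := C * pinv C with hP₁def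
  set P₂ : Matrix (Fin n₂) (Fin n₂) ℝ := U₂ * U₂ᵀ with hP₂def
  set P₃ : Matrix (Fin n₃) (Fin n₃) ℝ := U₃ * U₃ᵀ with hP₃def
  -- invertibility of CᵀC
  have hu : IsUnit (Cᵀ * C) :=
    isUnit_of_rank_eq_card _ (by rw [Matrix.rank_transpose_mul_self, hrank])
  have hudet : IsUnit (Cᵀ * C).det := (Matrix.isUnit_iff_isUnit_det _).mp hu
  have hinv : (Cᵀ * C)⁻¹ * (Cᵀ * C) = 1 := Matrix.nonsing_inv_mul _ hudet
  -- projection facts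
  have hP₁C : P₁ * C = C := by
    rw [hP₁def, pinv]
    simp only [Matrix.mul_assoc]
    rw [hinv, Matrix.mul_one]
  have hP₁T : P₁ᵀ = P₁ := by
    rw [hP₁def, pinv, Matrix.transpose_mul, Matrix.transpose_mul,
      Matrix.transpose_nonsing_inv, Matrix.transpose_mul, Matrix.transpose_transpose,
      Matrix.mul_assoc]
  have hP₁P₁ : P₁ * P₁ = P₁ := by
    calc P₁ * P₁ = (P₁ * C) * pinv C := by rw [hP₁def]; simp only [Matrix.mul_assoc]
      _ = P₁ := by rw [hP₁C, ← hP₁def]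
  have hP₂T : P₂ᵀ = P₂ := by
    rw [hP₂def, Matrix.transpose_mul, Matrix.transpose_transpose]
  have hP₂U : P₂ * U₂ = U₂ := by rw [hP₂def, Matrix.mul_assoc, hU₂, Matrix.mul_one]
  have hP₂P₂ : P₂ * P₂ = P₂ := by
    calc P₂ * P₂ = (P₂ * U₂) * U₂ᵀ := by rw [hP₂def]; simp only [Matrix.mul_assoc]
      _ = P₂ := by rw [hP₂U, ← hP₂def]
  have hP₃T : P₃ᵀ = P₃ := by
    rw [hP₃def, Matrix.transpose_mul, Matrix.transpose_transpose]
  have hP₃U : P₃ * U₃ = U₃ := by rw [hP₃def, Matrix.mul_assoc, hU₃, Matrix.mul_one]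
  have hP₃P₃ : P₃ * P₃ = P₃ := by
    calc P₃ * P₃ = (P₃ * U₃) * U₃ᵀ := by rw [hP₃def]; simp only [Matrix.mul_assoc]
      _ = P₃ := by rw [hP₃U, ← hP₃def]
  have hOm : ∀ {k : ℕ} (P : Matrix (Fin k) (Fin k) ℝ), Pᵀ = P → P * P = P →
      ((1 - P)ᵀ = 1 - P ∧ (1 - P) * (1 - P) = 1 - P) := by
    intro k P hT hI
    constructor
    · rw [Matrix.transpose_sub, Matrix.transpose_one, hT]
    · rw [Matrix.mul_sub, Matrix.mul_one, Matrix.sub_mul, Matrix.one_mul, hI, sub_self,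
        sub_zero]
  obtain ⟨hOm1T, hOm1I⟩ := hOm P₁ hP₁T hP₁P₁
  obtain ⟨hOm2T, hOm2I⟩ := hOm P₂ hP₂T hP₂P₂
  obtain ⟨hOm3T, hOm3I⟩ := hOm P₃ hP₃T hP₃P₃
  -- rewrite the approximation
  have hhat : mode3 U₃ (mode2 U₂ (mode1 C (mode3 U₃ᵀ (mode2 U₂ᵀ (mode1 (pinv C) A)))))
      = mode3 P₃ (mode2 P₂ (mode1 P₁ A)) := by
    rw [mode1_mode3, mode1_mode2, mode1_mode1, ← hP₁def, mode2_mode3, mode2_mode2,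
      ← hP₂def, mode3_mode3, ← hP₃def]
  have hcomm : mode3 P₃ (mode2 P₂ (mode1 P₁ A)) = mode1 P₁ (mode2 P₂ (mode3 P₃ A)) := by
    rw [← mode2_mode3, ← mode1_mode3, ← mode1_mode2]
  have hdecomp : A - mode3 P₃ (mode2 P₂ (mode1 P₁ A)) =
      (A - mode1 P₁ A) +
        (mode1 P₁ (A - mode2 P₂ A) + mode1 P₁ (mode2 P₂ (A - mode3 P₃ A))) := by
    rw [hcomm, mode1_sub, mode2_sub, mode1_sub]
    abel
  -- orthogonality
  have h12 : tinner (A - mode1 P₁ A) (mode1 P₁ (A - mode2 P₂ A)) = 0 := by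
    rw [tinner_unfold1, unfold1_sub]
    simp only [unfold1_mode1]
    rw [show unfold1 A - P₁ * unfold1 A = (1 - P₁) * unfold1 A by
        rw [Matrix.sub_mul, Matrix.one_mul],
      proj_minner_zero P₁ hP₁T hP₁P₁]
  have h13 : tinner (A - mode1 P₁ A) (mode1 P₁ (mode2 P₂ (A - mode3 P₃ A))) = 0 := by
    rw [tinner_unfold1, unfold1_sub]
    simp only [unfold1_mode1]
    rw [show unfold1 A - P₁ * unfold1 A = (1 - P₁) * unfold1 A by
        rw [Matrix.sub_mul, Matrix.one_mul],
      proj_minner_zero P₁ hP₁T hP₁P₁]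
  have h23 : tinner (mode1 P₁ (A - mode2 P₂ A)) (mode1 P₁ (mode2 P₂ (A - mode3 P₃ A))) = 0 := by
    have e1 : mode1 P₁ (A - mode2 P₂ A) = mode1 P₁ A - mode2 P₂ (mode1 P₁ A) := by
      rw [mode1_sub, mode1_mode2]
    have e2 : mode1 P₁ (mode2 P₂ (A - mode3 P₃ A)) =
        mode2 P₂ (mode1 P₁ (A - mode3 P₃ A)) := mode1_mode2 _ _ _
    rw [e1, e2, tinner_unfold2,
      show unfold2 (mode1 P₁ A - mode2 P₂ (mode1 P₁ A)) =
          (1 - P₂) * unfold2 (mode1 P₁ A) by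
        rw [unfold2_sub, unfold2_mode2, Matrix.sub_mul, Matrix.one_mul],
      unfold2_mode2, proj_minner_zero P₂ hP₂T hP₂P₂]
  -- bounds
  have b1 : tSq (A - mode1 P₁ A) ≤ frobSq E := by
    rw [tSq_unfold1, unfold1_sub, unfold1_mode1,
      show unfold1 A - P₁ * unfold1 A = (1 - P₁) * E by
        rw [hA1, Matrix.mul_add, ← Matrix.mul_assoc, hP₁C, Matrix.sub_mul, Matrix.one_mul]
        abel]
    exact frobSq_proj_le _ hOm1T hOm1I E
  have b2 : tSq (mode1 P₁ (A - mode2 P₂ A)) ≤ frobSq H₂ := by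
    calc tSq (mode1 P₁ (A - mode2 P₂ A))
        = frobSq (P₁ * unfold1 (A - mode2 P₂ A)) := by rw [tSq_unfold1, unfold1_mode1]
      _ ≤ frobSq (unfold1 (A - mode2 P₂ A)) := frobSq_proj_le _ hP₁T hP₁P₁ _
      _ = tSq (A - mode2 P₂ A) := (tSq_unfold1 _).symm
      _ = frobSq ((1 - P₂) * H₂) := by
          rw [tSq_unfold2, unfold2_sub, unfold2_mode2,
            show unfold2 A - P₂ * unfold2 A = (1 - P₂) * H₂ by
              rw [hA2, Matrix.mul_add, ← Matrix.mul_assoc, ← Matrix.mul_assoc, hP₂U,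
                Matrix.sub_mul, Matrix.one_mul]
              abel]
      _ ≤ frobSq H₂ := frobSq_proj_le _ hOm2T hOm2I H₂
  have b3 : tSq (mode1 P₁ (mode2 P₂ (A - mode3 P₃ A))) ≤ frobSq H₃ := by
    calc tSq (mode1 P₁ (mode2 P₂ (A - mode3 P₃ A)))
        = frobSq (P₁ * unfold1 (mode2 P₂ (A - mode3 P₃ A))) := by
          rw [tSq_unfold1, unfold1_mode1]
      _ ≤ frobSq (unfold1 (mode2 P₂ (A - mode3 P₃ A))) := frobSq_proj_le _ hP₁T hP₁P₁ _
      _ = frobSq (P₂ * unfold2 (A - mode3 P₃ A)) := by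
          rw [← tSq_unfold1, tSq_unfold2, unfold2_mode2]
      _ ≤ frobSq (unfold2 (A - mode3 P₃ A)) := frobSq_proj_le _ hP₂T hP₂P₂ _
      _ = frobSq ((1 - P₃) * H₃) := by
          rw [← tSq_unfold2, tSq_unfold3, unfold3_sub, unfold3_mode3,
            show unfold3 A - P₃ * unfold3 A = (1 - P₃) * H₃ by
              rw [hA3, Matrix.mul_add, ← Matrix.mul_assoc, ← Matrix.mul_assoc, hP₃U,
                Matrix.sub_mul, Matrix.one_mul]
              abel]
      _ ≤ frobSq H₃ := frobSq_proj_le _ hOm3T hOm3I H₃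
  -- assemble
  rw [hhat, hdecomp, tSq_add, tinner_add_right, h12, h13, tSq_add, h23]
  linarith
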